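/- Let T > 0. Then sup_{ε∈(0,1]} ε⁻² ∫_0^T ∫_0^t |(t−s+ε)^{1/3} + |t−s−ε|^{1/3} − 2(t−s)^{1/3}|³ ds dt < ∞. -/

import Mathlib

open Set MeasureTheory intervalIntegral

private lemma cont_rpow13 : Continuous fun x : ℝ => x ^ ((1:ℝ)/3) :=
  continuous_iff_continuousAt.2 fun x =>
    Real.continuousAt_rpow_const x _ (Or.inr (by norm_num))

private lemma rpow13_cube {x : ℝ} (hx : 0 ≤ x) : (x ^ ((1:ℝ)/3)) ^ 3 = x := by
  rw [← Real.rpow_natCast (x ^ ((1:ℝ)/3)) 3, ← Real.rpow_mul hx]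
  norm_num

private lemma rpow23_cube {x : ℝ} (hx : 0 ≤ x) : (x ^ ((2:ℝ)/3)) ^ 3 = x ^ 2 := by
  rw [← Real.rpow_natCast (x ^ ((2:ℝ)/3)) 3, ← Real.rpow_mul hx]
  norm_num

/-- concavity-type bound: a^{1/3} - b^{1/3} ≤ (a-b)/(3 b^{2/3}) for 0 < b ≤ a -/
private lemma concave_bound {a b : ℝ} (hb : 0 < b) (hab : b ≤ a) :
    a ^ ((1:ℝ)/3) - b ^ ((1:ℝ)/3) ≤ (a - b) / (3 * b ^ ((2:ℝ)/3)) := by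
  have ha : 0 < a := lt_of_lt_of_le hb hab
  set x := a ^ ((1:ℝ)/3) with hxdef
  set y := b ^ ((1:ℝ)/3) with hydef
  have hx3 : x ^ 3 = a := rpow13_cube ha.le
  have hy3 : y ^ 3 = b := rpow13_cube hb.le
  have hy2 : b ^ ((2:ℝ)/3) = y ^ 2 := by
    rw [hydef, ← Real.rpow_natCast (b ^ ((1:ℝ)/3)) 2, ← Real.rpow_mul hb.le]
    norm_num
  have hxpos : 0 < x := Real.rpow_pos_of_pos ha _
  have hypos : 0 < y := Real.rpow_pos_of_pos hb _
  rw [hy2, ← hx3, ← hy3]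
  rw [div_eq_inv_mul, ← sub_nonneg]
  have h3y2 : (0:ℝ) < 3 * y ^ 2 := by positivity
  rw [inv_mul_eq_div, sub_nonneg, le_div_iff₀ h3y2]
  nlinarith [sq_nonneg (x - y), mul_nonneg (sq_nonneg (x - y)) (by linarith : (0:ℝ) ≤ x + 2*y)]

/-- the key pointwise bound -/
private lemma pointwise_bound {ε u : ℝ} (hε : 0 < ε) (hu : 0 ≤ u) :
    |(u + ε) ^ ((1:ℝ)/3) + |u - ε| ^ ((1:ℝ)/3) - 2 * u ^ ((1:ℝ)/3)| ^ 3
      ≤ 3456 * ε ^ 3 * ((u + 2*ε) ^ 2)⁻¹ := by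
  have h2e : (0:ℝ) < u + 2*ε := by linarith
  rcases le_or_gt u (2*ε) with hcase | hcase
  · -- small u: crude bound by 4 (3ε)^{1/3}
    have hb : |(u + ε) ^ ((1:ℝ)/3) + |u - ε| ^ ((1:ℝ)/3) - 2 * u ^ ((1:ℝ)/3)|
        ≤ 4 * (3*ε) ^ ((1:ℝ)/3) := by
      have h1 : (u + ε) ^ ((1:ℝ)/3) ≤ (3*ε) ^ ((1:ℝ)/3) :=
        Real.rpow_le_rpow (by linarith) (by linarith) (by norm_num)
      have h2 : |u - ε| ^ ((1:ℝ)/3) ≤ (3*ε) ^ ((1:ℝ)/3) :=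
        Real.rpow_le_rpow (abs_nonneg _) (by rw [abs_le]; constructor <;> linarith) (by norm_num)
      have h3 : u ^ ((1:ℝ)/3) ≤ (3*ε) ^ ((1:ℝ)/3) :=
        Real.rpow_le_rpow hu (by linarith) (by norm_num)
      have h1' : (0:ℝ) ≤ (u + ε) ^ ((1:ℝ)/3) := Real.rpow_nonneg (by linarith) _
      have h2' : (0:ℝ) ≤ |u - ε| ^ ((1:ℝ)/3) := Real.rpow_nonneg (abs_nonneg _) _
      have h3' : (0:ℝ) ≤ u ^ ((1:ℝ)/3) := Real.rpow_nonneg hu _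
      rw [abs_le]
      constructor <;> linarith
    have hcube : |(u + ε) ^ ((1:ℝ)/3) + |u - ε| ^ ((1:ℝ)/3) - 2 * u ^ ((1:ℝ)/3)| ^ 3
        ≤ 192 * ε := by
      calc |(u + ε) ^ ((1:ℝ)/3) + |u - ε| ^ ((1:ℝ)/3) - 2 * u ^ ((1:ℝ)/3)| ^ 3
          ≤ (4 * (3*ε) ^ ((1:ℝ)/3)) ^ 3 := by
            exact pow_le_pow_left₀ (abs_nonneg _) hb 3
        _ = 64 * ((3*ε) ^ ((1:ℝ)/3)) ^ 3 := by ring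
        _ = 192 * ε := by rw [rpow13_cube (by linarith : (0:ℝ) ≤ 3*ε)]; ring
    refine hcube.trans ?_
    have hne : ε ≠ 0 := hε.ne'
    have hsq : (u + 2*ε) ^ 2 ≤ 16 * ε ^ 2 := by nlinarith
    have hiv : (16 * ε ^ 2)⁻¹ ≤ ((u + 2*ε) ^ 2)⁻¹ :=
      inv_anti₀ (by positivity) hsq
    calc (192:ℝ) * ε ≤ 216 * ε := by linarith
      _ = 3456 * ε ^ 3 * (16 * ε ^ 2)⁻¹ := by field_simp; ring
      _ ≤ 3456 * ε ^ 3 * ((u + 2*ε) ^ 2)⁻¹ := by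
          apply mul_le_mul_of_nonneg_left hiv (by positivity)
  · -- large u: second-difference decay
    have hue : 0 < u - ε := by linarith
    have habs : |u - ε| = u - ε := abs_of_pos hue
    set D := ε / (3 * (u - ε) ^ ((2:ℝ)/3)) with hD
    have hDpos : 0 < 3 * (u - ε) ^ ((2:ℝ)/3) := by
      have := Real.rpow_pos_of_pos hue ((2:ℝ)/3); linarith
    have hA : (u + ε) ^ ((1:ℝ)/3) - u ^ ((1:ℝ)/3) ≤ D := by
      have h1 := concave_bound (lt_of_lt_of_le hue (by linarith)) (by linarith : u ≤ u + ε)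
      refine h1.trans ?_
      rw [hD]
      have : u + ε - u = ε := by ring
      rw [this]
      apply div_le_div_of_nonneg_left hε.le hDpos
      have : (u - ε) ^ ((2:ℝ)/3) ≤ u ^ ((2:ℝ)/3) :=
        Real.rpow_le_rpow hue.le (by linarith) (by norm_num)
      linarith
    have hB : u ^ ((1:ℝ)/3) - (u - ε) ^ ((1:ℝ)/3) ≤ D := by
      have h1 := concave_bound hue (by linarith : u - ε ≤ u)
      have : u - (u - ε) = ε := by ring
      rw [this] at h1
      exact h1
    have hAnn : 0 ≤ (u + ε) ^ ((1:ℝ)/3) - u ^ ((1:ℝ)/3) := by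
      have := Real.rpow_le_rpow hu (by linarith : u ≤ u + ε) (by norm_num : (0:ℝ) ≤ 1/3)
      linarith
    have hBnn : 0 ≤ u ^ ((1:ℝ)/3) - (u - ε) ^ ((1:ℝ)/3) := by
      have := Real.rpow_le_rpow hue.le (by linarith : u - ε ≤ u) (by norm_num : (0:ℝ) ≤ 1/3)
      linarith
    have hf : |(u + ε) ^ ((1:ℝ)/3) + |u - ε| ^ ((1:ℝ)/3) - 2 * u ^ ((1:ℝ)/3)| ≤ D := by
      rw [habs, abs_le]
      constructor <;> linarith
    have hDnn : 0 ≤ D := by rw [hD]; positivity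
    have hcube : |(u + ε) ^ ((1:ℝ)/3) + |u - ε| ^ ((1:ℝ)/3) - 2 * u ^ ((1:ℝ)/3)| ^ 3
        ≤ ε ^ 3 / (27 * (u - ε) ^ 2) := by
      calc |(u + ε) ^ ((1:ℝ)/3) + |u - ε| ^ ((1:ℝ)/3) - 2 * u ^ ((1:ℝ)/3)| ^ 3
          ≤ D ^ 3 := pow_le_pow_left₀ (abs_nonneg _) hf 3
        _ = ε ^ 3 / (27 * ((u - ε) ^ ((2:ℝ)/3)) ^ 3) := by rw [hD, div_pow]; ring_nf
        _ = ε ^ 3 / (27 * (u - ε) ^ 2) := by rw [rpow23_cube hue.le]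
    refine hcube.trans ?_
    have hsq : (u + 2*ε) ^ 2 ≤ 16 * (u - ε) ^ 2 := by nlinarith
    have hP : (0:ℝ) ≤ ((u - ε) ^ 2)⁻¹ := by positivity
    have hinv : 16⁻¹ * ((u - ε) ^ 2)⁻¹ ≤ ((u + 2*ε) ^ 2)⁻¹ := by
      rw [← mul_inv]
      exact inv_anti₀ (by positivity) hsq
    calc ε ^ 3 / (27 * (u - ε) ^ 2)
        = ε ^ 3 * (27⁻¹ * ((u - ε) ^ 2)⁻¹) := by rw [div_eq_mul_inv, mul_inv]
      _ ≤ ε ^ 3 * (3456 * (16⁻¹ * ((u - ε) ^ 2)⁻¹)) := by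
          refine mul_le_mul_of_nonneg_left ?_ (pow_nonneg hε.le 3)
          nlinarith [hP]
      _ ≤ ε ^ 3 * (3456 * ((u + 2*ε) ^ 2)⁻¹) := by
          refine mul_le_mul_of_nonneg_left
            (mul_le_mul_of_nonneg_left hinv (by norm_num)) (pow_nonneg hε.le 3)
      _ = 3456 * ε ^ 3 * ((u + 2*ε) ^ 2)⁻¹ := by ring

theorem stmt18 (T : ℝ) (hT : 0 < T) :
    ∃ C : ℝ, ∀ ε ∈ Ioc (0:ℝ) 1,
      (ε ^ 2)⁻¹ * (∫ t in (0:ℝ)..T, ∫ s in (0:ℝ)..t,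
          |(t - s + ε) ^ ((1:ℝ)/3) + |t - s - ε| ^ ((1:ℝ)/3)
              - 2 * (t - s) ^ ((1:ℝ)/3)| ^ 3)
        ≤ C := by
  refine ⟨1728 * T, ?_⟩
  rintro ε ⟨hε0, hε1⟩
  have hε2 : (0:ℝ) < ε ^ 2 := by positivity
  -- inner integral bound for each t
  have hinner : ∀ t ∈ Set.Ioc (0:ℝ) T,
      ‖∫ s in (0:ℝ)..t, |(t - s + ε) ^ ((1:ℝ)/3) + |t - s - ε| ^ ((1:ℝ)/3)
          - 2 * (t - s) ^ ((1:ℝ)/3)| ^ 3‖ ≤ 1728 * ε ^ 2 := by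
    rintro t ⟨ht0, htT⟩
    set F : ℝ → ℝ := fun s => |(t - s + ε) ^ ((1:ℝ)/3) + |t - s - ε| ^ ((1:ℝ)/3)
        - 2 * (t - s) ^ ((1:ℝ)/3)| ^ 3 with hF
    set G : ℝ → ℝ := fun s => 3456 * ε ^ 3 * (((t + 2*ε) - s) ^ 2)⁻¹ with hG
    have hFcont : Continuous F := by
      apply Continuous.pow
      apply Continuous.abs
      apply Continuous.sub
      apply Continuous.add
      · exact cont_rpow13.comp (by continuity)
      · exact cont_rpow13.comp ((by continuity : Continuous fun s:ℝ => t - s - ε).abs)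
      · exact continuous_const.mul (cont_rpow13.comp (by continuity))
    have hFint : IntervalIntegrable F volume 0 t := hFcont.intervalIntegrable _ _
    have hGint : IntervalIntegrable G volume 0 t := by
      apply ContinuousOn.intervalIntegrable
      apply ContinuousOn.mul continuousOn_const
      apply ContinuousOn.inv₀
      · exact ((continuous_const.sub continuous_id).pow 2).continuousOn
      · intro s hs
        rw [Set.uIcc_of_le ht0.le] at hs
        have : 0 < (t + 2*ε) - s := by
          have := hs.2; nlinarith
        positivity
    have hFG : ∀ s ∈ Set.Icc (0:ℝ) t, F s ≤ G s := by
      intro s hs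
      have hu : 0 ≤ t - s := by linarith [hs.2]
      have := pointwise_bound hε0 hu
      have heq : t - s + 2*ε = (t + 2*ε) - s := by ring
      simp only [hF, hG]
      rw [← heq]
      convert this using 3 <;> ring
    have hmono : (∫ s in (0:ℝ)..t, F s) ≤ ∫ s in (0:ℝ)..t, G s :=
      intervalIntegral.integral_mono_on ht0.le hFint hGint hFG
    have hGval : (∫ s in (0:ℝ)..t, G s) ≤ 1728 * ε ^ 2 := by
      have hcs : (∫ s in (0:ℝ)..t, (((t + 2*ε) - s) ^ 2)⁻¹)
          = ∫ x in (2*ε)..(t + 2*ε), (x ^ 2)⁻¹ := by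
        have := intervalIntegral.integral_comp_sub_left
          (fun x : ℝ => (x ^ 2)⁻¹) (t + 2*ε) (a := 0) (b := t)
        simpa using this
      have hzp : (∫ x in (2*ε)..(t + 2*ε), (x ^ 2)⁻¹)
          = ∫ x in (2*ε)..(t + 2*ε), x ^ (-2 : ℤ) := by
        apply intervalIntegral.integral_congr
        intro x _
        show (x ^ 2)⁻¹ = x ^ (-2 : ℤ)
        rw [zpow_neg, zpow_two, sq]
      have hval : (∫ x in (2*ε)..(t + 2*ε), x ^ (-2 : ℤ))
          = (2*ε)⁻¹ - (t + 2*ε)⁻¹ := by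
        rw [integral_zpow]
        · norm_num
          ring
        · refine Or.inr ⟨by decide, ?_⟩
          rw [Set.uIcc_of_le (by linarith)]
          rintro ⟨h1, h2⟩
          linarith
      have hGsplit : (∫ s in (0:ℝ)..t, G s)
          = 3456 * ε ^ 3 * ((2*ε)⁻¹ - (t + 2*ε)⁻¹) := by
        rw [hG]
        rw [intervalIntegral.integral_const_mul, hcs, hzp, hval]
      rw [hGsplit]
      have h1 : (2*ε)⁻¹ - (t + 2*ε)⁻¹ ≤ (2*ε)⁻¹ := by
        have : 0 < (t + 2*ε)⁻¹ := by positivity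
        linarith
      calc 3456 * ε ^ 3 * ((2*ε)⁻¹ - (t + 2*ε)⁻¹)
          ≤ 3456 * ε ^ 3 * (2*ε)⁻¹ := by
            apply mul_le_mul_of_nonneg_left h1 (by positivity)
        _ = 1728 * ε ^ 2 := by field_simp; ring
    have hFnn : 0 ≤ ∫ s in (0:ℝ)..t, F s := by
      apply intervalIntegral.integral_nonneg ht0.le
      intro s _
      positivity
    rw [Real.norm_eq_abs, abs_of_nonneg hFnn]
    exact hmono.trans hGval
  -- outer integral bound
  have houter : ‖∫ t in (0:ℝ)..T, ∫ s in (0:ℝ)..t,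
      |(t - s + ε) ^ ((1:ℝ)/3) + |t - s - ε| ^ ((1:ℝ)/3)
          - 2 * (t - s) ^ ((1:ℝ)/3)| ^ 3‖ ≤ 1728 * ε ^ 2 * |T - 0| := by
    apply intervalIntegral.norm_integral_le_of_norm_le_const
    intro t ht
    rw [Set.uIoc_of_le hT.le] at ht
    exact hinner t ht
  rw [abs_of_pos (by linarith : (0:ℝ) < T - 0)] at houter
  have hle : (∫ t in (0:ℝ)..T, ∫ s in (0:ℝ)..t,
      |(t - s + ε) ^ ((1:ℝ)/3) + |t - s - ε| ^ ((1:ℝ)/3)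
          - 2 * (t - s) ^ ((1:ℝ)/3)| ^ 3) ≤ 1728 * ε ^ 2 * T := by
    calc _ ≤ ‖∫ t in (0:ℝ)..T, ∫ s in (0:ℝ)..t,
        |(t - s + ε) ^ ((1:ℝ)/3) + |t - s - ε| ^ ((1:ℝ)/3)
            - 2 * (t - s) ^ ((1:ℝ)/3)| ^ 3‖ := le_abs_self _
      _ ≤ 1728 * ε ^ 2 * (T - 0) := houter
      _ = 1728 * ε ^ 2 * T := by ring
  calc (ε ^ 2)⁻¹ * _ ≤ (ε ^ 2)⁻¹ * (1728 * ε ^ 2 * T) := by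
        apply mul_le_mul_of_nonneg_left hle (by positivity)
    _ = 1728 * T := by field_simp
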